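/- (Feldman et al. characterization) Given click-through-rates α_1 ≥ α_2 ≥ ... ≥ α_n ≥ 0, an allocation vector x ≥ 0 is expressible as x_i ≤ E_{π∼D}[α_{π(i)}] for some distribution D over permutations π of [n] if and only if for every subset S ⊆ [n], ∑_{i∈S} x_i ≤ ∑_{j=1}^{|S|} α_j. -/

import Mathlib

open Finset Pointwise

/-- Abel-summation comparison lemma. -/
private lemma feld_abel (n : ℕ) (μ u v : ℕ → ℝ)
    (hmono : ∀ i, i + 1 < n → μ (i + 1) ≤ μ i)
    (hlast : 0 ≤ μ (n - 1))
    (hpre : ∀ m, m ≤ n → ∑ k ∈ range m, u k ≤ ∑ k ∈ range m, v k) :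
    ∑ k ∈ range n, μ k * u k ≤ ∑ k ∈ range n, μ k * v k := by
  have hu := Finset.sum_range_by_parts μ u n
  have hv := Finset.sum_range_by_parts μ v n
  simp only [smul_eq_mul] at hu hv
  rw [hu, hv]
  apply sub_le_sub
  · exact mul_le_mul_of_nonneg_left (hpre n le_rfl) hlast
  · apply Finset.sum_le_sum
    intro i hi
    rw [Finset.mem_range] at hi
    have h1 : i + 1 < n := by omega
    have hc : μ (i + 1) - μ i ≤ 0 := sub_nonpos.mpr (hmono i h1)
    exact mul_le_mul_of_nonpos_left (hpre (i + 1) (by omega)) hc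

private lemma feld_filter_eq (n m : ℕ) (h : m ≤ n) :
    (Finset.univ.filter fun j : Fin n => (j : ℕ) < m) =
      Finset.map (Fin.castLEEmb h) Finset.univ := by
  ext j
  simp only [Finset.mem_filter, Finset.mem_univ, true_and, Finset.mem_map, Fin.castLEEmb,
    Function.Embedding.coeFn_mk]
  constructor
  · intro hj
    exact ⟨⟨(j : ℕ), hj⟩, rfl⟩
  · rintro ⟨k, -, rfl⟩
    simpa using k.isLt

private lemma feld_sum_filter (n m : ℕ) (h : m ≤ n) (f : Fin n → ℝ) :
    ∑ j ∈ Finset.univ.filter (fun j : Fin n => (j : ℕ) < m), f j =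
      ∑ k ∈ range m, (if hk : k < n then f ⟨k, hk⟩ else 0) := by
  rw [feld_filter_eq n m h, Finset.sum_map]
  rw [← Fin.sum_univ_eq_sum_range (fun k => if hk : k < n then f ⟨k, hk⟩ else 0) m]
  apply Finset.sum_congr rfl
  intro k _
  have hk : (k : ℕ) < n := lt_of_lt_of_le k.isLt h
  simp [Fin.castLEEmb, hk, Fin.castLE]

/-- Sum over any set is at most the sum over the top `card` rates. -/
private lemma feld_sorted_bound (n : ℕ) (α : Fin n → ℝ)
    (hαmono : ∀ i j : Fin n, i ≤ j → α j ≤ α i) (T : Finset (Fin n)) :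
    ∑ j ∈ T, α j ≤ ∑ j ∈ Finset.univ.filter (fun j : Fin n => (j : ℕ) < T.card), α j := by
  set m := T.card with hm
  have hmn : m ≤ n := by
    simpa using Finset.card_le_card (Finset.subset_univ T)
  set B := Finset.univ.filter (fun j : Fin n => (j : ℕ) < m) with hB
  have hcardB : B.card = m := by
    rw [hB, feld_filter_eq n m hmn, Finset.card_map, Finset.card_univ, Fintype.card_fin]
  have hcard : (T \ B).card = (B \ T).card := by
    rw [Finset.card_sdiff_comm]; rw [hcardB, hm]
  have hdiff : ∑ j ∈ T \ B, α j ≤ ∑ j ∈ B \ T, α j := by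
    have hcard' : Fintype.card ↥(T \ B) = Fintype.card ↥(B \ T) := by
      rw [Fintype.card_coe, Fintype.card_coe, hcard]
    let e : ↥(T \ B) ≃ ↥(B \ T) := Fintype.equivOfCardEq hcard'
    rw [← Finset.sum_coe_sort (T \ B), ← Finset.sum_coe_sort (B \ T)]
    rw [← Equiv.sum_comp e (fun b : ↥(B \ T) => α b)]
    apply Finset.sum_le_sum
    intro a _
    apply hαmono
    have h1 : ((e a : Fin n) : ℕ) < m :=
      (Finset.mem_filter.mp (Finset.mem_sdiff.mp (e a).2).1).2
    have h2 : ¬ ((a : Fin n) : ℕ) < m := fun hc =>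
      (Finset.mem_sdiff.mp a.2).2 (Finset.mem_filter.mpr ⟨Finset.mem_univ _, hc⟩)
    exact Fin.le_def.mpr (by omega)
  calc ∑ j ∈ T, α j = ∑ j ∈ T ∩ B, α j + ∑ j ∈ T \ B, α j :=
        (Finset.sum_inter_add_sum_sdiff T B _).symm
    _ ≤ ∑ j ∈ T ∩ B, α j + ∑ j ∈ B \ T, α j := by linarith
    _ = ∑ j ∈ B ∩ T, α j + ∑ j ∈ B \ T, α j := by rw [Finset.inter_comm]
    _ = ∑ j ∈ B, α j := Finset.sum_inter_add_sum_sdiff B T _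

theorem feldman_characterization (n : ℕ) (α : Fin n → ℝ)
    (hα0 : ∀ j, 0 ≤ α j)
    (hαmono : ∀ i j : Fin n, i ≤ j → α j ≤ α i)
    (x : Fin n → ℝ) (hx0 : ∀ i, 0 ≤ x i) :
    (∃ D : Equiv.Perm (Fin n) → ℝ,
        (∀ π, 0 ≤ D π) ∧ (∑ π : Equiv.Perm (Fin n), D π = 1) ∧
        ∀ i, x i ≤ ∑ π : Equiv.Perm (Fin n), D π * α (π i))
      ↔ ∀ S : Finset (Fin n),
          ∑ i ∈ S, x i ≤ ∑ j ∈ Finset.univ.filter (fun j : Fin n => (j : ℕ) < S.card), α j := by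
  constructor
  · rintro ⟨D, hD0, hD1, hDx⟩ S
    have key : ∀ π : Equiv.Perm (Fin n),
        ∑ i ∈ S, α (π i) ≤ ∑ j ∈ Finset.univ.filter (fun j : Fin n => (j : ℕ) < S.card), α j := by
      intro π
      have h1 : ∑ i ∈ S, α (π i) = ∑ j ∈ S.image π, α j :=
        (Finset.sum_image (fun a _ b _ h => π.injective h)).symm
      have h2 : (S.image π).card = S.card := Finset.card_image_of_injective S π.injective
      rw [h1]
      have := feld_sorted_bound n α hαmono (S.image π)
      rwa [h2] at this
    calc ∑ i ∈ S, x i ≤ ∑ i ∈ S, ∑ π : Equiv.Perm (Fin n), D π * α (π i) :=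
          Finset.sum_le_sum (fun i _ => hDx i)
      _ = ∑ π : Equiv.Perm (Fin n), ∑ i ∈ S, D π * α (π i) := Finset.sum_comm
      _ = ∑ π : Equiv.Perm (Fin n), D π * ∑ i ∈ S, α (π i) := by
          simp [Finset.mul_sum]
      _ ≤ ∑ π : Equiv.Perm (Fin n),
            D π * ∑ j ∈ Finset.univ.filter (fun j : Fin n => (j : ℕ) < S.card), α j :=
          Finset.sum_le_sum (fun π _ => mul_le_mul_of_nonneg_left (key π) (hD0 π))
      _ = _ := by rw [← Finset.sum_mul, hD1, one_mul]
  · intro H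
    by_contra hnex
    -- the convex compact set of feasible allocations (upper bounds)
    set g : (Equiv.Perm (Fin n) → ℝ) →ₗ[ℝ] (Fin n → ℝ) :=
      { toFun := fun D => fun i => ∑ π : Equiv.Perm (Fin n), D π * α (π i)
        map_add' := by
          intro D D'; funext i
          simp [add_mul, Finset.sum_add_distrib]
        map_smul' := by
          intro c D; funext i
          simp [Finset.mul_sum, mul_assoc] } with hg
    set A : Set (Fin n → ℝ) := g '' stdSimplex ℝ (Equiv.Perm (Fin n)) with hA
    set B : Set (Fin n → ℝ) := Set.univ.pi (fun _ : Fin n => Set.Iic (0 : ℝ)) with hBdef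
    set C : Set (Fin n → ℝ) := A + B with hC
    have hgc : Continuous g := g.continuous_of_finiteDimensional
    have hAconv : Convex ℝ A := (convex_stdSimplex ℝ _).linear_image g
    have hAcomp : IsCompact A := (isCompact_stdSimplex ℝ _).image hgc
    have hBconv : Convex ℝ B := convex_pi (fun _ _ => convex_Iic 0)
    have hBclosed : IsClosed B := isClosed_set_pi (fun _ _ => isClosed_Iic)
    have hCconv : Convex ℝ C := hAconv.add hBconv
    have hCclosed : IsClosed C := hBclosed.add_left_of_isCompact hAcomp
    have hmemC : ∀ y : Fin n → ℝ, y ∈ C ↔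
        ∃ D : Equiv.Perm (Fin n) → ℝ, D ∈ stdSimplex ℝ (Equiv.Perm (Fin n)) ∧
          ∀ i, y i ≤ g D i := by
      intro y
      constructor
      · rintro ⟨a, ⟨D, hD, rfl⟩, b, hb, rfl⟩
        refine ⟨D, hD, fun i => ?_⟩
        have : b i ≤ 0 := hb i (Set.mem_univ i)
        simp only [Pi.add_apply]
        linarith
      · rintro ⟨D, hD, hy⟩
        refine ⟨g D, ⟨D, hD, rfl⟩, y - g D, fun i _ => ?_, by funext i; simp⟩
        simp only [Pi.sub_apply, Set.mem_Iic]
        linarith [hy i]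
    have hxC : x ∉ C := by
      intro hx
      rw [hmemC] at hx
      obtain ⟨D, hD, hxD⟩ := hx
      obtain ⟨hD1, hD2⟩ := hD
      exact hnex ⟨D, hD1, hD2, hxD⟩
    obtain ⟨f, u, hfa, hux⟩ := geometric_hahn_banach_closed_point hCconv hCclosed hxC
    set lam : Fin n → ℝ := fun i => f (Pi.single i 1) with hlam
    have hf : ∀ y : Fin n → ℝ, f y = ∑ i : Fin n, lam i * y i := by
      intro y
      conv_lhs => rw [pi_eq_sum_univ y]
      rw [map_sum]
      apply Finset.sum_congr rfl
      intro i _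
      rw [map_smul, smul_eq_mul, hlam, mul_comm]
      congr 1
      show f (fun j => if i = j then 1 else 0) = f (Pi.single i 1)
      congr 1
      funext j
      simp [Pi.single_apply, eq_comm]
    have hgδ : ∀ (σ : Equiv.Perm (Fin n)) (i : Fin n),
        g (fun π => if π = σ then (1:ℝ) else 0) i = α (σ i) := by
      intro σ i
      simp [hg]
    -- α itself is in C
    have hαC : (α : Fin n → ℝ) ∈ C := by
      rw [hmemC]
      refine ⟨fun π => if π = 1 then 1 else 0, ⟨fun π => by positivity, by simp⟩, fun i => ?_⟩
      rw [hgδ]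
      simp
    have hlam0 : ∀ i, 0 ≤ lam i := by
      intro i
      by_contra hneg
      push_neg at hneg
      set t : ℝ := (u - f α) / (-(lam i)) with ht
      have hfα : f α < u := hfa α hαC
      have ht0 : 0 ≤ t := by
        apply div_nonneg <;> linarith
      have hmem : α - t • (Pi.single i 1 : Fin n → ℝ) ∈ C := by
        rw [hmemC]
        refine ⟨fun π => if π = 1 then 1 else 0, ⟨fun π => by positivity, by simp⟩, fun j => ?_⟩
        have hsingle : (0:ℝ) ≤ t * (Pi.single i 1 : Fin n → ℝ) j := by
          by_cases h : j = i
          · subst h; simp [ht0]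
          · simp [Pi.single_apply, h]
        rw [hgδ]
        simp only [Pi.sub_apply, Pi.smul_apply, smul_eq_mul, Equiv.Perm.coe_one, id_eq]
        linarith
      have := hfa _ hmem
      simp only [map_sub, map_smul, smul_eq_mul] at this
      have htv : t * lam i = -(u - f α) := by
        have hne : lam i ≠ 0 := ne_of_lt hneg
        rw [ht]
        field_simp
      have this' : f α - t * lam i < u := this
      rw [htv] at this'
      linarith
    -- sorting permutation
    set ρ : Equiv.Perm (Fin n) := Tuple.sort (fun i => -lam i) with hρ
    have hmonot : Monotone ((fun i => -lam i) ∘ ρ) := Tuple.monotone_sort _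
    have hanti : ∀ k l : Fin n, k ≤ l → lam (ρ l) ≤ lam (ρ k) := by
      intro k l hkl
      have := hmonot hkl
      simp only [Function.comp_apply, neg_le_neg_iff] at this
      linarith
    -- the permuted α is in C and bounds f x
    have hwC : (fun i => α (ρ.symm i)) ∈ C := by
      rw [hmemC]
      refine ⟨fun π => if π = (ρ⁻¹ : Equiv.Perm (Fin n)) then 1 else 0,
        ⟨fun π => by positivity, by simp⟩, fun i => ?_⟩
      rw [hgδ]
      exact le_of_eq rfl
    have hfw : f (fun i => α (ρ.symm i)) = ∑ k : Fin n, lam (ρ k) * α k := by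
      rw [hf]
      rw [← Equiv.sum_comp ρ (fun i => lam i * α (ρ.symm i))]
      apply Finset.sum_congr rfl
      intro k _
      simp
    have hfx : f x = ∑ k : Fin n, lam (ρ k) * x (ρ k) := by
      rw [hf, ← Equiv.sum_comp ρ (fun i => lam i * x i)]
    -- extended sequences
    set μ' : ℕ → ℝ := fun k => if hk : k < n then lam (ρ ⟨k, hk⟩) else 0 with hμ'
    set u' : ℕ → ℝ := fun k => if hk : k < n then x (ρ ⟨k, hk⟩) else 0 with hu'
    set v' : ℕ → ℝ := fun k => if hk : k < n then α ⟨k, hk⟩ else 0 with hv'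
    have hpre : ∀ m, m ≤ n → ∑ k ∈ range m, u' k ≤ ∑ k ∈ range m, v' k := by
      intro m hm
      have hinj : Function.Injective (fun k : Fin m => ρ (Fin.castLE hm k)) := by
        intro a b hab
        simp only at hab
        have := ρ.injective hab
        exact Fin.castLE_injective hm this
      set S : Finset (Fin n) :=
        Finset.map ⟨fun k : Fin m => ρ (Fin.castLE hm k), hinj⟩ Finset.univ with hS
      have hScard : S.card = m := by
        rw [hS, Finset.card_map, Finset.card_univ, Fintype.card_fin]
      have hLHS : ∑ i ∈ S, x i = ∑ k ∈ range m, u' k := by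
        rw [hS, Finset.sum_map]
        rw [← Fin.sum_univ_eq_sum_range u' m]
        apply Finset.sum_congr rfl
        intro k _
        have hk : (k : ℕ) < n := lt_of_lt_of_le k.isLt hm
        simp only [Function.Embedding.coeFn_mk, hu', hk, dif_pos]
        congr 1
      have hRHS : ∑ j ∈ Finset.univ.filter (fun j : Fin n => (j : ℕ) < m), α j
          = ∑ k ∈ range m, v' k := feld_sum_filter n m hm α
      have := H S
      rw [hScard] at this
      rw [hLHS, hRHS] at this
      exact this
    have hmono' : ∀ i, i + 1 < n → μ' (i + 1) ≤ μ' i := by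
      intro i hi
      have hi' : i < n := by omega
      simp only [hμ', dif_pos hi, dif_pos hi']
      exact hanti ⟨i, hi'⟩ ⟨i + 1, hi⟩ (by simp [Fin.le_def])
    have hlast : 0 ≤ μ' (n - 1) := by
      by_cases hn : n = 0
      · simp [hμ', hn]
      · have : n - 1 < n := by omega
        simp only [hμ', dif_pos this]
        exact hlam0 _
    have habel := feld_abel n μ' u' v' hmono' hlast hpre
    have hineq : ∑ k : Fin n, lam (ρ k) * x (ρ k) ≤ ∑ k : Fin n, lam (ρ k) * α k := by
      have h1 : ∑ k : Fin n, lam (ρ k) * x (ρ k) = ∑ k ∈ range n, μ' k * u' k := by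
        rw [← Fin.sum_univ_eq_sum_range (fun k => μ' k * u' k) n]
        apply Finset.sum_congr rfl
        intro k _
        simp [hμ', hu', k.isLt]
      have h2 : ∑ k : Fin n, lam (ρ k) * α k = ∑ k ∈ range n, μ' k * v' k := by
        rw [← Fin.sum_univ_eq_sum_range (fun k => μ' k * v' k) n]
        apply Finset.sum_congr rfl
        intro k _
        simp [hμ', hv', k.isLt]
      rw [h1, h2]
      exact habel
    have hfwu : f (fun i => α (ρ.symm i)) < u := hfa _ hwC
    rw [hfw] at hfwu
    rw [hfx] at hux
    linarith
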